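/- Let char K ≠ 2 and let G, H be unital K-algebras each satisfying [x1,x2,x3] = 0 and the identity [x1,x2][x3,x4]···[x_{2k+1},x_{2k+2}] = 0 (a product of k+1 double commutators). Then G ⊗ H satisfies the identity [x1,...,x_{2k+2}] = 0. -/

import Mathlib

open scoped TensorProduct

/-- The commutator `[a,b] = ab - ba` in a ring. -/
def rcomm {A : Type*} [Ring A] (a b : A) : A := a * b - b * a

/-- The left-normed commutator `[a, l₀, l₁, ...]`. -/
def lnc {A : Type*} [Ring A] (a : A) (l : List A) : A := l.foldl rcomm a

/-- The algebra `A` satisfies the identity `[x_1, ..., x_q] = 0`. -/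
def SatisfiesLieId (A : Type*) [Ring A] (q : ℕ) : Prop :=
  ∀ (a : A) (l : List A), l.length + 1 = q → lnc a l = 0

/-- `x` is a product of `i` commutators. -/
def IsCommProd {A : Type*} [Ring A] (i : ℕ) (x : A) : Prop :=
  ∃ l : List A, l.length = i ∧ (∀ y ∈ l, ∃ a b, y = rcomm a b) ∧ l.prod = x

lemma isCommProd_one {A : Type*} [Ring A] : IsCommProd 0 (1 : A) :=
  ⟨[], rfl, by simp, rfl⟩

lemma IsCommProd.mul_rcomm {A : Type*} [Ring A] {i : ℕ} {C : A} (hC : IsCommProd i C)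
    (a b : A) : IsCommProd (i + 1) (C * rcomm a b) := by
  obtain ⟨l, h1, h2, h3⟩ := hC
  refine ⟨l ++ [rcomm a b], by simp [h1], ?_, by simp [h3]⟩
  intro y hy
  rcases List.mem_append.1 hy with hy | hy
  · exact h2 y hy
  · simp at hy; exact ⟨a, b, hy⟩

lemma IsCommProd.central {A : Type*} [Ring A]
    (h3 : ∀ x y z : A, rcomm (rcomm x y) z = 0) {i : ℕ} {C : A}
    (hC : IsCommProd i C) : ∀ t, C * t = t * C := by
  obtain ⟨l, -, hmem, rfl⟩ := hC
  clear i
  induction l with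
  | nil => simp
  | cons c l ih =>
    intro t
    have hc : ∀ s : A, c * s = s * c := by
      obtain ⟨a, b, rfl⟩ := hmem c (by simp)
      intro s
      have := h3 a b s
      rw [rcomm, sub_eq_zero] at this
      exact this
    have hl := ih (fun y hy => hmem y (by simp [hy]))
    calc (c :: l).prod * t = c * (l.prod * t) := by rw [List.prod_cons, mul_assoc]
      _ = c * (t * l.prod) := by rw [hl]
      _ = (c * t) * l.prod := by rw [mul_assoc]
      _ = (t * c) * l.prod := by rw [hc]
      _ = t * (c :: l).prod := by rw [List.prod_cons, mul_assoc]

lemma IsCommProd.eq_zero {A : Type*} [Ring A] {k : ℕ}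
    (hk : ∀ a b : Fin (k + 1) → A, (List.ofFn fun i => rcomm (a i) (b i)).prod = 0)
    {i : ℕ} {C : A} (hi : k + 1 ≤ i) (hC : IsCommProd i C) : C = 0 := by
  obtain ⟨l, hlen, hmem, rfl⟩ := hC
  have h1 : (l.take (k + 1)).length = k + 1 := by
    rw [List.length_take]; omega
  have h2 : ∀ n : Fin (k + 1), ∃ p : A × A,
      (l.take (k + 1)).get (Fin.cast h1.symm n) = rcomm p.1 p.2 := by
    intro n
    obtain ⟨a, b, hab⟩ := hmem _ (List.take_subset _ _ (List.get_mem _ _))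
    exact ⟨(a, b), hab⟩
  choose p hp using h2
  have key : List.ofFn (fun n => rcomm (p n).1 (p n).2) = l.take (k + 1) := by
    apply List.ext_get (by simp [h1])
    intro n hn1 hn2
    rw [List.get_ofFn]
    exact (hp ⟨n, by simpa using hn1⟩).symm
  have hz : (l.take (k + 1)).prod = 0 := by
    rw [← key]; exact hk (fun n => (p n).1) (fun n => (p n).2)
  calc l.prod = (l.take (k + 1) ++ l.drop (k + 1)).prod := by rw [List.take_append_drop]
    _ = (l.take (k + 1)).prod * (l.drop (k + 1)).prod := List.prod_append
    _ = 0 := by rw [hz, zero_mul]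

/-- The set of simple tensors `(Cg) ⊗ (Dh)` where `C` is a product of `i` commutators in `G`,
`D` a product of `j` commutators in `H`, and `i + j = n`. -/
def commSet (K : Type*) [Field K] (G H : Type*) [Ring G] [Ring H]
    [Algebra K G] [Algebra K H] (n : ℕ) : Set (TensorProduct K G H) :=
  { t | ∃ (i j : ℕ) (C g : G) (D h : H), i + j = n ∧ IsCommProd i C ∧ IsCommProd j D ∧
      t = (C * g) ⊗ₜ[K] (D * h) }

lemma rcomm_zero_right {A : Type*} [Ring A] (x : A) : rcomm x 0 = 0 := by simp [rcomm]

lemma rcomm_zero_left {A : Type*} [Ring A] (x : A) : rcomm 0 x = 0 := by simp [rcomm]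

lemma rcomm_add_right {A : Type*} [Ring A] (x u v : A) :
    rcomm x (u + v) = rcomm x u + rcomm x v := by
  simp only [rcomm, mul_add, add_mul]; abel

lemma rcomm_add_left {A : Type*} [Ring A] (x y u : A) :
    rcomm (x + y) u = rcomm x u + rcomm y u := by
  simp only [rcomm, mul_add, add_mul]; abel

lemma commSet_step {K : Type*} [Field K] {G H : Type*} [Ring G] [Ring H]
    [Algebra K G] [Algebra K H]
    (hG3 : ∀ x y z : G, rcomm (rcomm x y) z = 0)
    (hH3 : ∀ x y z : H, rcomm (rcomm x y) z = 0)
    {n : ℕ} {x : TensorProduct K G H} (hx : x ∈ commSet K G H n) (u : TensorProduct K G H) :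
    rcomm x u ∈ Submodule.span K (commSet K G H (n + 1)) := by
  induction u using TensorProduct.induction_on with
  | zero => rw [rcomm_zero_right]; exact zero_mem _
  | add u v hu hv => rw [rcomm_add_right]; exact add_mem hu hv
  | tmul g' h' =>
    obtain ⟨i, j, C, g, D, h, hij, hC, hD, rfl⟩ := hx
    have e1 : g' * (C * g) = C * (g' * g) := by
      rw [← mul_assoc, ← hC.central hG3 g', mul_assoc]
    have e2 : h' * (D * h) = D * (h' * h) := by
      rw [← mul_assoc, ← hD.central hH3 h', mul_assoc]
    have key : rcomm ((C * g) ⊗ₜ[K] (D * h)) (g' ⊗ₜ[K] h')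
        = (C * rcomm g g' * 1) ⊗ₜ[K] (D * (h * h'))
          + (C * (g' * g)) ⊗ₜ[K] (D * rcomm h h' * 1) := by
      simp only [rcomm, Algebra.TensorProduct.tmul_mul_tmul, mul_one, mul_sub,
        TensorProduct.tmul_sub, TensorProduct.sub_tmul, e1, e2, mul_assoc]
      abel
    rw [key]
    refine add_mem (Submodule.subset_span ?_) (Submodule.subset_span ?_)
    · exact ⟨i + 1, j, C * rcomm g g', 1, D, h * h', by omega, hC.mul_rcomm g g', hD, rfl⟩
    · exact ⟨i, j + 1, C, g' * g, D * rcomm h h', 1, by omega, hC, hD.mul_rcomm h h', rfl⟩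

lemma span_step {K : Type*} [Field K] {G H : Type*} [Ring G] [Ring H]
    [Algebra K G] [Algebra K H]
    (hG3 : ∀ x y z : G, rcomm (rcomm x y) z = 0)
    (hH3 : ∀ x y z : H, rcomm (rcomm x y) z = 0)
    {n : ℕ} {x : TensorProduct K G H} (hx : x ∈ Submodule.span K (commSet K G H n))
    (u : TensorProduct K G H) :
    rcomm x u ∈ Submodule.span K (commSet K G H (n + 1)) := by
  induction hx using Submodule.span_induction with
  | mem y hy => exact commSet_step hG3 hH3 hy u
  | zero => rw [rcomm_zero_left]; exact zero_mem _
  | add a b _ _ ha hb => rw [rcomm_add_left]; exact add_mem ha hb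
  | smul c a _ ha =>
    have : rcomm (c • a) u = c • rcomm a u := by
      simp only [rcomm, smul_sub, smul_mul_assoc, mul_smul_comm]
    rw [this]
    exact Submodule.smul_mem _ _ ha

theorem stmt_8 (K : Type*) [Field K] (hchar : ringChar K ≠ 2)
    (G H : Type*) [Ring G] [Ring H] [Algebra K G] [Algebra K H]
    (k : ℕ) (hk : 1 ≤ k)
    (hG3 : ∀ x y z : G, rcomm (rcomm x y) z = 0)
    (hGk : ∀ a b : Fin (k + 1) → G, (List.ofFn fun i => rcomm (a i) (b i)).prod = 0)
    (hH3 : ∀ x y z : H, rcomm (rcomm x y) z = 0)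
    (hHk : ∀ a b : Fin (k + 1) → H, (List.ofFn fun i => rcomm (a i) (b i)).prod = 0) :
    SatisfiesLieId (TensorProduct K G H) (2 * k + 2) := by
  intro a l hl
  -- Step 1: everything lies in the span of commSet 0.
  have top : ∀ x : TensorProduct K G H, x ∈ Submodule.span K (commSet K G H 0) := by
    intro x
    have h2 : {t : TensorProduct K G H | ∃ g h, g ⊗ₜ[K] h = t} ⊆ commSet K G H 0 := by
      rintro t ⟨g, h, rfl⟩
      exact ⟨0, 0, 1, g, 1, h, rfl, isCommProd_one, isCommProd_one, by simp⟩
    have := Submodule.span_mono (R := K) h2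
    rw [TensorProduct.span_tmul_eq_top] at this
    exact this trivial
  -- Step 2: iterated commutators climb the filtration.
  have main : ∀ (l : List (TensorProduct K G H)) (a : TensorProduct K G H) (m : ℕ),
      a ∈ Submodule.span K (commSet K G H m) →
      lnc a l ∈ Submodule.span K (commSet K G H (m + l.length)) := by
    intro l
    induction l with
    | nil => intro a m ha; simpa [lnc] using ha
    | cons u l ih =>
      intro a m ha
      have h1 : lnc a (u :: l) = lnc (rcomm a u) l := rfl
      have h2 := ih (rcomm a u) (m + 1) (span_step hG3 hH3 ha u)
      rw [h1]
      have : m + 1 + l.length = m + (u :: l).length := by simp; omega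
      rwa [this] at h2
  -- Step 3: commSet (2k+1) vanishes.
  have kill : commSet K G H (2 * k + 1) ⊆ {(0 : TensorProduct K G H)} := by
    rintro t ⟨i, j, C, g, D, h, hij, hC, hD, rfl⟩
    rcases (by omega : k + 1 ≤ i ∨ k + 1 ≤ j) with hi | hj
    · have hz : C = 0 := hC.eq_zero hGk hi
      simp [hz]
    · have hz : D = 0 := hD.eq_zero hHk hj
      simp [hz]
  have hlen : l.length = 2 * k + 1 := by omega
  have hmem := main l a 0 (top a)
  rw [hlen] at hmem
  have hle : Submodule.span K (commSet K G H (0 + (2 * k + 1))) ≤ ⊥ := by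
    rw [Submodule.span_le]
    intro t ht
    have := kill (by simpa using ht)
    simpa using this
  simpa using hle hmem
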